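/- Let D ⊆ ℂ^N be a convex domain. Then there exists a unique integer k with 0 ≤ k ≤ N such that for some ℂ-linear automorphism T of ℂ^N and some convex domain D' ⊆ ℂ^k containing no complex affine line, T(D) = D' × ℂ^{N−k}. That is: such a decomposition exists for exactly one value of k (and for that k the factor D' is a nonempty open convex subset of ℂ^k containing no complex affine line). -/

import Mathlib

/-- A convex domain in `ℂ^k`: a nonempty open convex subset. -/
def IsConvexDomain {k : ℕ} (D : Set (Fin k → ℂ)) : Prop :=
  IsOpen D ∧ Convex ℝ D ∧ D.Nonempty

/-- `S` contains a complex affine line `{p + ζ • v : ζ ∈ ℂ}` with `v ≠ 0`. -/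
def ContainsComplexLine {E : Type*} [AddCommGroup E] [Module ℂ E] (S : Set E) : Prop :=
  ∃ p v : E, v ≠ 0 ∧ ∀ ζ : ℂ, p + ζ • v ∈ S

open Module Set


/-- The subspace of directions in which `D` is invariant under complex translations. -/
noncomputable def linSpace {N : ℕ} (D : Set (Fin N → ℂ)) : Submodule ℂ (Fin N → ℂ) where
  carrier := {v | ∀ q ∈ D, ∀ ζ : ℂ, q + ζ • v ∈ D}
  add_mem' := by
    intro v w hv hw q hq ζ
    have := hw (q + ζ • v) (hv q hq ζ) ζ
    simpa [smul_add, add_assoc] using this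
  zero_mem' := by intro q hq ζ; simpa using hq
  smul_mem' := by
    intro c v hv q hq ζ
    simpa [smul_smul] using hv q hq (ζ * c)

lemma mem_closure_of_line {N : ℕ} {D : Set (Fin N → ℂ)} (hconv : Convex ℝ D)
    {p v : Fin N → ℂ} (h : ∀ ζ : ℂ, p + ζ • v ∈ D)
    {q : Fin N → ℂ} (hq : q ∈ D) (ζ : ℂ) : q + ζ • v ∈ closure D := by
  have key : ∀ s : ℝ, s ∈ Set.Ioo (0:ℝ) 1 → q + ζ • v + s • (p - q) ∈ D := by
    intro s hs
    have hs0 : (s:ℂ) ≠ 0 := by exact_mod_cast ne_of_gt hs.1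
    have hmem := hconv hq (h (ζ / s)) (by linarith [hs.2] : (0:ℝ) ≤ 1 - s)
      (le_of_lt hs.1) (by ring)
    have : (1 - s) • q + s • (p + (ζ / (s:ℂ)) • v) = q + ζ • v + s • (p - q) := by
      have h1 : s • ((ζ / (s:ℂ)) • v) = ζ • v := by
        rw [← smul_assoc]
        congr 1
        show (s:ℂ) * (ζ / s) = ζ
        field_simp
      rw [smul_add, h1, sub_smul, smul_sub, one_smul]
      abel
    rwa [this] at hmem
  have htend : Filter.Tendsto (fun s : ℝ => q + ζ • v + s • (p - q))
      (nhdsWithin 0 (Set.Ioi 0)) (nhds (q + ζ • v)) := by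
    have : Filter.Tendsto (fun s : ℝ => q + ζ • v + s • (p - q)) (nhds 0)
        (nhds (q + ζ • v + (0:ℝ) • (p - q))) := by
      apply Filter.Tendsto.add tendsto_const_nhds
      exact (continuous_id.smul continuous_const).tendsto 0
    simpa using this.mono_left nhdsWithin_le_nhds
  exact mem_closure_of_tendsto htend
    (Filter.eventually_of_mem (Ioo_mem_nhdsGT_of_mem (by norm_num : (0:ℝ) ∈ Set.Ico (0:ℝ) 1))
      key)

/-- A complex line contained in an open convex set gives an invariant direction. -/
lemma line_mem_linSpace {N : ℕ} {D : Set (Fin N → ℂ)} (hop : IsOpen D) (hconv : Convex ℝ D)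
    {p v : Fin N → ℂ} (h : ∀ ζ : ℂ, p + ζ • v ∈ D) : v ∈ linSpace D := by
  intro q hq ζ
  have hcl : q + (2 * ζ) • v ∈ closure D := mem_closure_of_line hconv h hq (2 * ζ)
  have hqi : q ∈ interior D := by rwa [hop.interior_eq]
  have := hconv.combo_interior_closure_mem_interior hqi hcl
    (by norm_num : (0:ℝ) < 1/2) (by norm_num : (0:ℝ) ≤ 1/2) (by norm_num)
  have heq : (1/2 : ℝ) • q + (1/2 : ℝ) • (q + (2 * ζ) • v) = q + ζ • v := by
    rw [smul_add, ← smul_assoc]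
    have : (1/2 : ℝ) • (2 * ζ) = ζ := by
      show ((1/2 : ℝ) : ℂ) * (2 * ζ) = ζ
      push_cast
      ring
    rw [this]
    match_scalars <;> push_cast <;> ring
  rw [heq] at this
  rwa [hop.interior_eq] at this

/-- Any valid decomposition determines `k` via the dimension of `linSpace D`. -/
lemma finrank_linSpace_eq {N : ℕ} {D : Set (Fin N → ℂ)} (hD : IsConvexDomain D) {k : ℕ}
    (T : (Fin N → ℂ) ≃ₗ[ℂ] ((Fin k → ℂ) × (Fin (N - k) → ℂ)))
    (D' : Set (Fin k → ℂ)) (hnl : ¬ ContainsComplexLine D')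
    (hTD : T '' D = D' ×ˢ (Set.univ : Set (Fin (N - k) → ℂ))) :
    finrank ℂ (linSpace D) = N - k := by
  obtain ⟨q, hq⟩ := hD.2.2
  set f : (Fin N → ℂ) →ₗ[ℂ] (Fin k → ℂ) :=
    (LinearMap.fst ℂ (Fin k → ℂ) (Fin (N - k) → ℂ)).comp T.toLinearMap with hf
  have hker : linSpace D = LinearMap.ker f := by
    ext v
    constructor
    · intro hv
      by_contra hne
      have hne' : (T v).1 ≠ 0 := hne
      apply hnl
      refine ⟨(T q).1, (T v).1, hne', fun ζ => ?_⟩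
      have hm : q + ζ • v ∈ D := hv q hq ζ
      have : T (q + ζ • v) ∈ D' ×ˢ (Set.univ : Set (Fin (N - k) → ℂ)) := by
        rw [← hTD]; exact Set.mem_image_of_mem _ hm
      have h1 := this.1
      simpa [map_add, map_smul] using h1
    · intro hv q' hq' ζ
      have hv1 : (T v).1 = 0 := hv
      have hmem : T (q' + ζ • v) ∈ D' ×ˢ (Set.univ : Set (Fin (N - k) → ℂ)) := by
        constructor
        · have : (T (q' + ζ • v)).1 = (T q').1 := by
            simp [map_add, map_smul, hv1]
          rw [this]
          have : T q' ∈ D' ×ˢ (Set.univ : Set (Fin (N - k) → ℂ)) := by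
            rw [← hTD]; exact Set.mem_image_of_mem _ hq'
          exact this.1
        · trivial
      rw [← hTD] at hmem
      obtain ⟨z, hz, hzeq⟩ := hmem
      rwa [← T.injective hzeq]
  have hsurj : Function.Surjective f := by
    intro y
    exact ⟨T.symm (y, 0), by simp [hf]⟩
  have hrn := LinearMap.finrank_range_add_finrank_ker f
  rw [LinearMap.range_eq_top.mpr hsurj] at hrn
  have h1 : finrank ℂ (⊤ : Submodule ℂ (Fin k → ℂ)) = k := by
    simp [finrank_top]
  have h2 : finrank ℂ (Fin N → ℂ) = N := by simp
  rw [h1, h2] at hrn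
  rw [hker]
  omega

/-- Proposition 1.2, canonical complete hyperbolic decomposition:
for a convex domain `D ⊆ ℂ^N` there is a unique `k`, `0 ≤ k ≤ N`, such that, up to a
`ℂ`-linear change of coordinates, `D = D' × ℂ^{N-k}` with `D' ⊆ ℂ^k` a convex domain
containing no complex affine line. -/
theorem canonical_decomposition {N : ℕ} (D : Set (Fin N → ℂ)) (hD : IsConvexDomain D) :
    ∃! k : ℕ, k ≤ N ∧
      ∃ (T : (Fin N → ℂ) ≃ₗ[ℂ] ((Fin k → ℂ) × (Fin (N - k) → ℂ)))
        (D' : Set (Fin k → ℂ)),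
        IsConvexDomain D' ∧ ¬ ContainsComplexLine D' ∧
        T '' D = D' ×ˢ (Set.univ : Set (Fin (N - k) → ℂ)) := by
  obtain ⟨hop, hconv, hne⟩ := hD
  set V := linSpace D with hV
  have hVle : finrank ℂ V ≤ N := by
    have := Submodule.finrank_le V
    simpa using this
  set k := N - finrank ℂ V with hk
  obtain ⟨W, hW⟩ := Submodule.exists_isCompl V
  have hWV : finrank ℂ W + finrank ℂ V = N := by
    have := Submodule.finrank_add_eq_of_isCompl hW.symm
    simpa using this
  have hWk : finrank ℂ W = k := by omega
  have hVd : finrank ℂ V = N - k := by omega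
  -- linear equivalences
  have eW : W ≃ₗ[ℂ] (Fin k → ℂ) := LinearEquiv.ofFinrankEq _ _ (by simp [hWk])
  have eV : V ≃ₗ[ℂ] (Fin (N - k) → ℂ) := LinearEquiv.ofFinrankEq _ _ (by simp [hVd])
  set e1 : (W × V) ≃ₗ[ℂ] (Fin N → ℂ) := Submodule.prodEquivOfIsCompl W V hW.symm with he1
  set T : (Fin N → ℂ) ≃ₗ[ℂ] ((Fin k → ℂ) × (Fin (N - k) → ℂ)) :=
    e1.symm.trans (eW.prodCongr eV) with hT
  have hTsymm0 : ∀ y : Fin (N - k) → ℂ, T.symm (0, y) ∈ V := by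
    intro y
    have : T.symm (0, y) = e1 ((eW.prodCongr eV).symm (0, y)) := rfl
    rw [this]
    have h2 : (eW.prodCongr eV).symm (0, y) = (eW.symm 0, eV.symm y) := rfl
    rw [h2, Submodule.coe_prodEquivOfIsCompl']
    simp
  have hTV : ∀ v ∈ V, (T v).1 = 0 := by
    intro v hv
    have : T v = (eW.prodCongr eV) (e1.symm v) := rfl
    have h2 : (Submodule.prodEquivOfIsCompl W V hW.symm).symm v = ((0, ⟨v, hv⟩) : W × V) :=
      Submodule.prodEquivOfIsCompl_symm_apply_right (p := W) (q := V) hW.symm ⟨v, hv⟩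
    rw [this, he1, h2]
    exact map_zero eW
  set D' : Set (Fin k → ℂ) := {x | T.symm (x, 0) ∈ D} with hD'
  -- the image identity
  have himg : T '' D = D' ×ˢ (Set.univ : Set (Fin (N - k) → ℂ)) := by
    ext z
    constructor
    · rintro ⟨w, hw, rfl⟩
      refine ⟨?_, trivial⟩
      show T.symm ((T w).1, 0) ∈ D
      have hd : T.symm ((T w).1, 0) = w + (-1 : ℂ) • T.symm (0, (T w).2) := by
        have : ((T w).1, (0 : Fin (N - k) → ℂ)) = T w + (-1 : ℂ) • (0, (T w).2) := by
          ext <;> simp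
        rw [this, map_add, map_smul, T.symm_apply_apply]
      rw [hd]
      exact (hTsymm0 (T w).2) w hw (-1)
    · rintro ⟨hz1, -⟩
      refine ⟨T.symm z, ?_, by simp⟩
      have hd : T.symm z = T.symm (z.1, 0) + (1 : ℂ) • T.symm (0, z.2) := by
        rw [one_smul, ← map_add]
        congr 1
        ext <;> simp
      rw [hd]
      exact (hTsymm0 z.2) _ hz1 1
  -- D' is a convex domain
  set L : (Fin k → ℂ) →ₗ[ℂ] (Fin N → ℂ) :=
    T.symm.toLinearMap.comp (LinearMap.inl ℂ (Fin k → ℂ) (Fin (N - k) → ℂ)) with hL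
  have hD'eq : D' = L ⁻¹' D := rfl
  have hD'open : IsOpen D' := by
    rw [hD'eq]
    exact hop.preimage L.continuous_of_finiteDimensional
  have hD'conv : Convex ℝ D' := by
    rw [hD'eq]
    exact hconv.linear_preimage (L.restrictScalars ℝ)
  have hD'ne : D'.Nonempty := by
    obtain ⟨q, hq⟩ := hne
    have : T q ∈ D' ×ˢ (Set.univ : Set (Fin (N - k) → ℂ)) := by
      rw [← himg]; exact Set.mem_image_of_mem _ hq
    exact ⟨(T q).1, this.1⟩
  have hD'nl : ¬ ContainsComplexLine D' := by
    rintro ⟨p, v, hv, hline⟩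
    have hlineD : ∀ ζ : ℂ, T.symm (p, 0) + ζ • T.symm (v, 0) ∈ D := by
      intro ζ
      have : T.symm (p, 0) + ζ • T.symm (v, 0) = T.symm (p + ζ • v, 0) := by
        rw [← map_smul, ← map_add]
        congr 1
        ext <;> simp
      rw [this]
      exact hline ζ
    have hmemV : T.symm (v, 0) ∈ V := line_mem_linSpace hop hconv hlineD
    have := hTV _ hmemV
    rw [T.apply_symm_apply] at this
    exact hv this
  refine ⟨k, ⟨by omega, T, D', ⟨hD'open, hD'conv, hD'ne⟩, hD'nl, himg⟩, ?_⟩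
  rintro k' ⟨hk', T', D'', hD'', hnl'', himg''⟩
  have h2 : finrank ℂ V = N - k' := finrank_linSpace_eq ⟨hop, hconv, hne⟩ T' D'' hnl'' himg''
  omega
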